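/- If A and B are both Lyapunov regular matrices, then \overline{H}(A) ⊆ \overline{H}(B) holds if and only if H(A) ⊆ H(B), where H(Y) (resp. \overline{H}(Y)) denotes the set of Hermitian H with HY + Y*H positive definite (resp. positive semidefinite). -/

import Mathlib

open Matrix
open scoped ComplexOrder

namespace Stmt4Aux

open Polynomial

variable {n : ℕ}

lemma isHermitian_real_smul {M : Matrix (Fin n) (Fin n) ℂ} (hM : M.IsHermitian) (r : ℝ) :
    ((r : ℂ) • M).IsHermitian := by
  unfold Matrix.IsHermitian
  rw [conjTranspose_smul, hM.eq]
  norm_num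

lemma dot_smul_expand (M : Matrix (Fin n) (Fin n) ℂ) (r : ℝ) (x : Fin n → ℂ) :
    star x ⬝ᵥ ((r : ℂ) • M) *ᵥ x = (r : ℂ) * (star x ⬝ᵥ M *ᵥ x) := by
  rw [smul_mulVec, dotProduct_smul, smul_eq_mul]

lemma posDef_real_smul {M : Matrix (Fin n) (Fin n) ℂ} (hM : M.PosDef) {r : ℝ} (hr : 0 < r) :
    ((r : ℂ) • M).PosDef := by
  refine Matrix.PosDef.of_dotProduct_mulVec_pos (isHermitian_real_smul hM.1 r) (fun x hx => ?_)
  rw [dot_smul_expand]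
  exact mul_pos (by exact_mod_cast hr) (hM.dotProduct_mulVec_pos hx)

lemma posSemidef_real_smul {M : Matrix (Fin n) (Fin n) ℂ} (hM : M.PosSemidef) {r : ℝ}
    (hr : 0 ≤ r) : ((r : ℂ) • M).PosSemidef := by
  refine Matrix.PosSemidef.of_dotProduct_mulVec_nonneg (isHermitian_real_smul hM.1 r) (fun x => ?_)
  rw [dot_smul_expand]
  exact mul_nonneg (by exact_mod_cast hr) (hM.dotProduct_mulVec_nonneg x)

lemma eval_charpoly (M : Matrix (Fin n) (Fin n) ℂ) (μ : ℂ) :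
    M.charpoly.eval μ = (scalar (Fin n) μ - M).det := by
  rw [Matrix.charpoly, eval_det, matPolyEquiv_charmatrix, eval_sub, eval_X, eval_C]

lemma algebraMap_matrix_eq (μ : ℂ) :
    algebraMap ℂ (Matrix (Fin n) (Fin n) ℂ) μ = scalar (Fin n) μ := rfl

lemma mem_spectrum_iff_root {M : Matrix (Fin n) (Fin n) ℂ} {μ : ℂ} :
    μ ∈ spectrum ℂ M ↔ M.charpoly.eval μ = 0 := by
  rw [spectrum.mem_iff, eval_charpoly, algebraMap_matrix_eq,
    Matrix.isUnit_iff_isUnit_det, isUnit_iff_ne_zero, not_not]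

lemma conjTranspose_algebraMap (c : ℂ) :
    (algebraMap ℂ (Matrix (Fin n) (Fin n) ℂ) c)ᴴ = algebraMap ℂ _ (star c) := by
  rw [algebraMap_matrix_eq, algebraMap_matrix_eq, scalar_apply, scalar_apply,
    diagonal_conjTranspose]
  congr

lemma mem_spectrum_neg_conjTranspose {M : Matrix (Fin n) (Fin n) ℂ} {μ : ℂ}
    (h : μ ∈ spectrum ℂ (-Mᴴ)) : -(starRingEnd ℂ μ) ∈ spectrum ℂ M := by
  rw [spectrum.mem_iff] at h ⊢
  intro hu
  apply h
  have h2 : IsUnit ((algebraMap ℂ (Matrix (Fin n) (Fin n) ℂ) (-(starRingEnd ℂ μ)) - M)ᴴ) :=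
    (Matrix.isUnit_conjTranspose _).mpr hu
  have h3 := h2.neg
  have key : algebraMap ℂ (Matrix (Fin n) (Fin n) ℂ) μ - -Mᴴ =
      -((algebraMap ℂ (Matrix (Fin n) (Fin n) ℂ) (-(starRingEnd ℂ μ)) - M)ᴴ) := by
    rw [conjTranspose_sub, conjTranspose_algebraMap]
    simp only [star_neg, map_neg, Complex.star_def, Complex.conj_conj]
    abel
  rw [key]
  exact h3

lemma pow_intertwine {X A C : Matrix (Fin n) (Fin n) ℂ} (h : X * A = C * X) (k : ℕ) :
    X * A ^ k = C ^ k * X := by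
  induction k with
  | zero => simp
  | succ k ih =>
      rw [pow_succ, pow_succ, ← Matrix.mul_assoc, ih, Matrix.mul_assoc, h, ← Matrix.mul_assoc]

lemma aeval_intertwine {X A C : Matrix (Fin n) (Fin n) ℂ} (h : X * A = C * X) (p : ℂ[X]) :
    X * aeval A p = aeval C p * X := by
  induction p using Polynomial.induction_on' with
  | add p q hp hq => rw [map_add, map_add, mul_add, add_mul, hp, hq]
  | monomial k c =>
      rw [aeval_monomial, aeval_monomial]
      calc X * (algebraMap ℂ _ c * A ^ k)
          = algebraMap ℂ _ c * (X * A ^ k) := by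
            rw [← Matrix.mul_assoc, ← Algebra.commutes c X, Matrix.mul_assoc]
        _ = algebraMap ℂ _ c * C ^ k * X := by rw [pow_intertwine h k, Matrix.mul_assoc]

/-- Existence of a Hermitian solution of `G A + Aᴴ G = 1` for Lyapunov regular `A`. -/
lemma exists_G (A : Matrix (Fin n) (Fin n) ℂ) (hn : 0 < n)
    (hreg : ∀ μ ∈ spectrum ℂ A, ∀ ν ∈ spectrum ℂ A, μ + starRingEnd ℂ ν ≠ 0) :
    ∃ G : Matrix (Fin n) (Fin n) ℂ, G.IsHermitian ∧ G * A + Aᴴ * G = 1 := by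
  haveI : Nonempty (Fin n) := Fin.pos_iff_nonempty.mp hn
  let L : Matrix (Fin n) (Fin n) ℂ →ₗ[ℂ] Matrix (Fin n) (Fin n) ℂ :=
    { toFun := fun X => X * A + Aᴴ * X
      map_add' := fun x y => by
        simp only [add_mul, mul_add]
        abel
      map_smul' := fun c x => by
        simp only [smul_mul_assoc, mul_smul_comm, smul_add, RingHom.id_apply] }
  have hinj : Function.Injective L := by
    rw [← LinearMap.ker_eq_bot, LinearMap.ker_eq_bot']
    intro X hX
    have hX' : X * A + Aᴴ * X = 0 := hX
    have hcomm : X * A = (-Aᴴ) * X := by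
      rw [neg_mul]
      exact eq_neg_of_add_eq_zero_left hX'
    have h1 := aeval_intertwine hcomm A.charpoly
    rw [Matrix.aeval_self_charpoly, Matrix.mul_zero] at h1
    have hu : IsUnit (aeval (-Aᴴ) A.charpoly) := by
      by_contra hnu
      have h0 : (0 : ℂ) ∈ spectrum ℂ (aeval (-Aᴴ) A.charpoly) := (spectrum.zero_mem_iff (R := ℂ)).mpr hnu
      rw [spectrum.map_polynomial_aeval_of_nonempty _ _
        (spectrum.nonempty_of_isAlgClosed_of_finiteDimensional ℂ _)] at h0
      obtain ⟨k, hk, hk0⟩ := h0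
      have h2 : k ∈ spectrum ℂ A := mem_spectrum_iff_root.mpr hk0
      have h3 : -(starRingEnd ℂ k) ∈ spectrum ℂ A := mem_spectrum_neg_conjTranspose hk
      exact hreg k h2 (-(starRingEnd ℂ k)) h3 (by simp)
    exact hu.mul_left_cancel (by rw [← h1, Matrix.mul_zero])
  obtain ⟨G₀, hG₀⟩ := (LinearMap.injective_iff_surjective).mp hinj 1
  have hG₀' : G₀ * A + Aᴴ * G₀ = 1 := hG₀
  have hG₀'' : G₀ᴴ * A + Aᴴ * G₀ᴴ = 1 := by
    have h := congrArg Matrix.conjTranspose hG₀'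
    rw [conjTranspose_add, conjTranspose_mul, conjTranspose_mul, conjTranspose_conjTranspose,
      conjTranspose_one, add_comm] at h
    exact h
  refine ⟨(2⁻¹ : ℂ) • (G₀ + G₀ᴴ), ?_, ?_⟩
  · unfold Matrix.IsHermitian
    rw [conjTranspose_smul, conjTranspose_add, conjTranspose_conjTranspose]
    rw [add_comm G₀ᴴ G₀]
    norm_num
  · rw [smul_mul_assoc, mul_smul_comm, ← smul_add, add_mul, mul_add]
    have hre : G₀ * A + G₀ᴴ * A + (Aᴴ * G₀ + Aᴴ * G₀ᴴ) =
        (G₀ * A + Aᴴ * G₀) + (G₀ᴴ * A + Aᴴ * G₀ᴴ) := by abel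
    rw [hre, hG₀', hG₀'', ← two_smul ℂ (1 : Matrix (Fin n) (Fin n) ℂ), smul_smul]
    norm_num

lemma le_smul_one {M : Matrix (Fin n) (Fin n) ℂ} (hM : M.IsHermitian) (r : ℝ)
    (h : ∀ i, r ≤ hM.eigenvalues i) : (M - (r : ℂ) • 1).PosSemidef := by
  have hU : (hM.eigenvectorUnitary : Matrix (Fin n) (Fin n) ℂ) *
      star (hM.eigenvectorUnitary : Matrix (Fin n) (Fin n) ℂ) = 1 :=
    (Matrix.mem_unitaryGroup_iff).mp hM.eigenvectorUnitary.2
  have key : M - (r : ℂ) • 1 =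
      (hM.eigenvectorUnitary : Matrix (Fin n) (Fin n) ℂ) *
        (diagonal (RCLike.ofReal ∘ hM.eigenvalues) - (r : ℂ) • 1) *
        star (hM.eigenvectorUnitary : Matrix (Fin n) (Fin n) ℂ) := by
    rw [Matrix.mul_sub, Matrix.sub_mul, mul_smul_comm, Matrix.mul_one, smul_mul_assoc, hU]
    conv_lhs => rw [hM.spectral_theorem, Unitary.conjStarAlgAut_apply]
  rw [key, star_eq_conjTranspose]
  apply Matrix.PosSemidef.mul_mul_conjTranspose_same
  have hd : diagonal (RCLike.ofReal ∘ hM.eigenvalues) - (r : ℂ) • 1 =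
      diagonal (fun i => ((hM.eigenvalues i - r : ℝ) : ℂ)) := by
    rw [← diagonal_one, ← diagonal_smul, diagonal_sub]
    congr 1
    funext i
    simp only [Pi.sub_apply, Pi.smul_apply, Pi.one_apply, Function.comp_apply, smul_eq_mul,
      mul_one, Complex.ofReal_sub]
    rfl
  rw [hd]
  rw [posSemidef_diagonal_iff]
  intro i
  rw [Complex.zero_le_real]
  linarith [h i]

lemma smul_one_le {N : Matrix (Fin n) (Fin n) ℂ} (hN : N.IsHermitian) (r : ℝ)
    (h : ∀ i, hN.eigenvalues i ≤ r) : ((r : ℂ) • 1 - N).PosSemidef := by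
  have hU : (hN.eigenvectorUnitary : Matrix (Fin n) (Fin n) ℂ) *
      star (hN.eigenvectorUnitary : Matrix (Fin n) (Fin n) ℂ) = 1 :=
    (Matrix.mem_unitaryGroup_iff).mp hN.eigenvectorUnitary.2
  have key : (r : ℂ) • 1 - N =
      (hN.eigenvectorUnitary : Matrix (Fin n) (Fin n) ℂ) *
        ((r : ℂ) • 1 - diagonal (RCLike.ofReal ∘ hN.eigenvalues)) *
        star (hN.eigenvectorUnitary : Matrix (Fin n) (Fin n) ℂ) := by
    rw [Matrix.mul_sub, Matrix.sub_mul, mul_smul_comm, Matrix.mul_one, smul_mul_assoc, hU]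
    conv_lhs => rw [hN.spectral_theorem, Unitary.conjStarAlgAut_apply]
  rw [key, star_eq_conjTranspose]
  apply Matrix.PosSemidef.mul_mul_conjTranspose_same
  have hd : (r : ℂ) • 1 - diagonal (RCLike.ofReal ∘ hN.eigenvalues) =
      diagonal (fun i => ((r - hN.eigenvalues i : ℝ) : ℂ)) := by
    rw [← diagonal_one, ← diagonal_smul, diagonal_sub]
    congr 1
    funext i
    simp only [Pi.sub_apply, Pi.smul_apply, Pi.one_apply, Function.comp_apply, smul_eq_mul,
      mul_one, Complex.ofReal_sub]
    rfl
  rw [hd]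
  rw [posSemidef_diagonal_iff]
  intro i
  rw [Complex.zero_le_real]
  linarith [h i]

lemma exists_shrink {M N : Matrix (Fin n) (Fin n) ℂ} (hM : M.PosDef) (hN : N.IsHermitian)
    (hn : 0 < n) : ∃ t : ℝ, 0 < t ∧ (M - (t : ℂ) • N).PosDef := by
  haveI : Nonempty (Fin n) := Fin.pos_iff_nonempty.mp hn
  obtain ⟨i₀, hi₀⟩ := Finite.exists_min hM.1.eigenvalues
  obtain ⟨j₀, hj₀⟩ := Finite.exists_max hN.eigenvalues
  set c := hM.1.eigenvalues i₀ with hcdef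
  set d := hN.eigenvalues j₀ with hddef
  have hc : 0 < c := hM.eigenvalues_pos i₀
  set t := c / (2 * (|d| + 1)) with htdef
  have hd1 : (0:ℝ) < |d| + 1 := by positivity
  have ht : 0 < t := by positivity
  have htd : t * d < c := by
    calc t * d ≤ t * |d| := mul_le_mul_of_nonneg_left (le_abs_self d) ht.le
      _ < c := by
        rw [htdef, div_mul_eq_mul_div, div_lt_iff₀ (by positivity)]
        nlinarith [abs_nonneg d]
  refine ⟨t, ht, ?_⟩
  have h1 : (M - (c : ℂ) • 1).PosSemidef := le_smul_one hM.1 c hi₀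
  have h2 : ((d : ℂ) • 1 - N).PosSemidef := smul_one_le hN d hj₀
  have h3 : ((t : ℂ) • ((d : ℂ) • 1 - N)).PosSemidef := posSemidef_real_smul h2 ht.le
  have h4 : (((c - t * d : ℝ) : ℂ) • (1 : Matrix (Fin n) (Fin n) ℂ)).PosDef :=
    posDef_real_smul Matrix.PosDef.one (by linarith)
  have key : M - (t : ℂ) • N =
      ((M - (c : ℂ) • 1) + (t : ℂ) • ((d : ℂ) • 1 - N)) + ((c - t * d : ℝ) : ℂ) • 1 := by
    push_cast
    module
  rw [key]
  exact Matrix.PosDef.posSemidef_add ((h1.add h3)) h4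

lemma lyap_herm {H Y : Matrix (Fin n) (Fin n) ℂ} (hH : H.IsHermitian) :
    (H * Y + Yᴴ * H).IsHermitian := by
  unfold Matrix.IsHermitian
  rw [conjTranspose_add, conjTranspose_mul, conjTranspose_mul, conjTranspose_conjTranspose,
    hH.eq, add_comm]

lemma lyap_sub_smul (H G Y : Matrix (Fin n) (Fin n) ℂ) (t : ℂ) :
    (H - t • G) * Y + Yᴴ * (H - t • G) = (H * Y + Yᴴ * H) - t • (G * Y + Yᴴ * G) := by
  rw [Matrix.sub_mul, Matrix.mul_sub, smul_mul_assoc, mul_smul_comm, smul_add]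
  abel

lemma lyap_add_smul (H G Y : Matrix (Fin n) (Fin n) ℂ) (t : ℂ) :
    (H + t • G) * Y + Yᴴ * (H + t • G) = (H * Y + Yᴴ * H) + t • (G * Y + Yᴴ * G) := by
  rw [Matrix.add_mul, Matrix.mul_add, smul_mul_assoc, mul_smul_comm, smul_add]
  abel

lemma posSemidef_of_forall_pos (P K : Matrix (Fin n) (Fin n) ℂ) (hP : P.IsHermitian)
    (h : ∀ ε : ℝ, 0 < ε → (P + (ε : ℂ) • K).PosDef) : P.PosSemidef := by
  refine Matrix.PosSemidef.of_dotProduct_mulVec_nonneg hP (fun x => ?_)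
  rcases eq_or_ne x 0 with rfl | hx
  · simp
  set a := star x ⬝ᵥ P *ᵥ x with hadef
  set b := star x ⬝ᵥ K *ᵥ x with hbdef
  have key : ∀ ε : ℝ, 0 < ε → 0 < a + (ε : ℂ) * b := by
    intro ε hε
    have h1 := (h ε hε).dotProduct_mulVec_pos hx
    rw [Matrix.add_mulVec, dotProduct_add, smul_mulVec, dotProduct_smul, smul_eq_mul] at h1
    exact h1
  have h1 := key 1 one_pos
  have h2 := key 2 two_pos
  rw [Complex.lt_def] at h1 h2
  have him : a.im = 0 ∧ b.im = 0 := by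
    have e1 := h1.2
    have e2 := h2.2
    simp only [Complex.add_im, Complex.mul_im, Complex.ofReal_re, Complex.ofReal_im,
      Complex.zero_im, zero_mul, add_zero, mul_zero, zero_add] at e1 e2
    constructor <;> linarith
  have hre : 0 ≤ a.re := by
    by_contra hlt
    push_neg at hlt
    rcases le_or_gt b.re 0 with hb | hb
    · have := h1.1
      simp only [Complex.add_re, Complex.mul_re, Complex.ofReal_re, Complex.ofReal_im,
        Complex.zero_re, one_mul, zero_mul, sub_zero] at this
      linarith
    · have hε : (0:ℝ) < -a.re / (2 * b.re) := div_pos (by linarith) (by linarith)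
      have := (key _ hε)
      rw [Complex.lt_def] at this
      have hre' := this.1
      simp only [Complex.add_re, Complex.mul_re, Complex.ofReal_re, Complex.ofReal_im,
        Complex.zero_re, zero_mul, sub_zero] at hre'
      have : -a.re / (2 * b.re) * b.re = -a.re / 2 := by
        field_simp
      rw [this] at hre'
      linarith
  rw [Complex.le_def]
  constructor
  · simpa using hre
  · simp [him.1]

end Stmt4Aux

open Stmt4Aux

/-- For Lyapunov regular `A` and `B`, the inclusion of non-strict Lyapunov
solution sets is equivalent to the inclusion of strict Lyapunov solution
sets. -/
theorem stmt4 {n : ℕ} (A B : Matrix (Fin n) (Fin n) ℂ)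
    (hregA : ∀ μ ∈ spectrum ℂ A, ∀ ν ∈ spectrum ℂ A, μ + starRingEnd ℂ ν ≠ 0)
    (hregB : ∀ μ ∈ spectrum ℂ B, ∀ ν ∈ spectrum ℂ B, μ + starRingEnd ℂ ν ≠ 0) :
    (∀ H : Matrix (Fin n) (Fin n) ℂ, H.IsHermitian →
        (H * A + Aᴴ * H).PosSemidef → (H * B + Bᴴ * H).PosSemidef) ↔
      (∀ H : Matrix (Fin n) (Fin n) ℂ, H.IsHermitian →
        (H * A + Aᴴ * H).PosDef → (H * B + Bᴴ * H).PosDef) := by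
  rcases Nat.eq_zero_or_pos n with rfl | hn
  · constructor <;> intro _ H hH _
    · exact ⟨lyap_herm hH, fun x hx => absurd (Subsingleton.elim x 0) hx⟩
    · refine ⟨lyap_herm hH, fun x => ?_⟩
      obtain rfl : x = 0 := Subsingleton.elim x 0
      simp
  obtain ⟨GA, hGA, hGAeq⟩ := exists_G A hn hregA
  obtain ⟨GB, hGB, hGBeq⟩ := exists_G B hn hregB
  constructor
  · intro hyp H hH hpd
    obtain ⟨t, ht, htpd⟩ := exists_shrink hpd (lyap_herm (Y := A) hGB) hn
    have h1 : ((H - (t : ℂ) • GB) * A + Aᴴ * (H - (t : ℂ) • GB)).PosDef := by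
      rw [lyap_sub_smul]
      exact htpd
    have h2 := hyp _ (hH.sub (isHermitian_real_smul hGB t)) h1.posSemidef
    rw [lyap_sub_smul, hGBeq] at h2
    have h3 : H * B + Bᴴ * H = ((H * B + Bᴴ * H) - (t : ℂ) • 1) + (t : ℂ) • 1 := by abel
    rw [h3]
    exact Matrix.PosDef.posSemidef_add h2 (posDef_real_smul Matrix.PosDef.one ht)
  · intro hyp H hH hpsd
    apply posSemidef_of_forall_pos _ (GA * B + Bᴴ * GA) (lyap_herm hH)
    intro ε hε
    have h1 : ((H + (ε : ℂ) • GA) * A + Aᴴ * (H + (ε : ℂ) • GA)).PosDef := by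
      rw [lyap_add_smul, hGAeq]
      exact Matrix.PosDef.posSemidef_add hpsd (posDef_real_smul Matrix.PosDef.one hε)
    have h2 := hyp _ (hH.add (isHermitian_real_smul hGA ε)) h1
    rw [lyap_add_smul] at h2
    exact h2
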